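/- Let A, G : ℝ → ℝ be continuously differentiable, let 𝒟 = [a,b] be compact with A(v) ≤ −ν < 0 and G(v) ≥ 0 on 𝒟, fix T_s > 0, and set M = max_{v∈𝒟} |d/dv e^{A(v)T_s}|, M' = max_{v∈𝒟} |G'(v)|, G_max = max_{v∈𝒟} G(v). Let w̃ : ℤ_- → (0,1] be a weighting sequence satisfying c₁ = Σ_{k=−∞}^{−1} |k| e^{−(|k|−1)ν T_s} / min{w̃_l : k ≤ l ≤ 0} < ∞ and c₂ = Σ_{k=−∞}^{0} e^{−|k|ν T_s} / w̃_{k−1} < ∞. Define F on 𝒟-valued sequences Ṽ : ℤ_- → 𝒟 by F(Ṽ) = Σ_{k=−∞}^{0} ( Π_{l=k}^{−1} e^{A(Ṽ_l) T_s} ) · G(Ṽ_{k−1}) (empty product equal to 1). Then F is well defined and satisfies |F(Ṽ) − F(Ṽ')| ≤ (M·G_max·c₁ + M'·c₂) · ‖Ṽ − Ṽ'‖_{w̃}; in particular F is continuous with respect to the metric d(Ṽ,Ṽ') = ‖Ṽ − Ṽ'‖_{w̃}, i.e., F is a discrete-time fading memory functional. -/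

import Mathlib

open Finset in
private lemma dms_prod_diff (r D : ℝ) (hr : 0 ≤ r) (hD : 0 ≤ D) :
    ∀ (n : ℕ) (p q : ℕ → ℝ), (∀ j, j < n → 0 ≤ p j ∧ p j ≤ r) →
      (∀ j, j < n → 0 ≤ q j ∧ q j ≤ r) → (∀ j, j < n → |p j - q j| ≤ D) →
      |∏ j ∈ range n, p j - ∏ j ∈ range n, q j| ≤ n * D * r ^ (n - 1) := by
  intro n
  induction n with
  | zero => intro p q _ _ _; simp
  | succ n ih =>
    intro p q hp hq hpq
    have hlt : ∀ j, j < n → j < n + 1 := fun j hj => hj.trans (Nat.lt_succ_self n)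
    have ihn := ih p q (fun j hj => hp j (hlt j hj)) (fun j hj => hq j (hlt j hj))
      (fun j hj => hpq j (hlt j hj))
    have hPn0 : 0 ≤ ∏ j ∈ range n, p j :=
      Finset.prod_nonneg (fun j hj => (hp j (hlt j (Finset.mem_range.mp hj))).1)
    have hQn0 : 0 ≤ ∏ j ∈ range n, q j :=
      Finset.prod_nonneg (fun j hj => (hq j (hlt j (Finset.mem_range.mp hj))).1)
    have hPnr : ∏ j ∈ range n, p j ≤ r ^ n := by
      calc ∏ j ∈ range n, p j ≤ ∏ j ∈ range n, r :=
            Finset.prod_le_prod (fun j hj => (hp j (hlt j (Finset.mem_range.mp hj))).1)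
              (fun j hj => (hp j (hlt j (Finset.mem_range.mp hj))).2)
        _ = r ^ n := by rw [Finset.prod_const, Finset.card_range]
    have hn1 : n < n + 1 := Nat.lt_succ_self n
    have hqn := hq n hn1
    have hpn := hp n hn1
    have habs : |∏ j ∈ range n, p j| = ∏ j ∈ range n, p j := abs_of_nonneg hPn0
    have hqabs : |q n| = q n := abs_of_nonneg hqn.1
    rw [Finset.prod_range_succ, Finset.prod_range_succ]
    have key : (∏ j ∈ range n, p j) * p n - (∏ j ∈ range n, q j) * q n
        = (∏ j ∈ range n, p j - ∏ j ∈ range n, q j) * q n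
          + (∏ j ∈ range n, p j) * (p n - q n) := by ring
    have step1 : |(∏ j ∈ range n, p j) * p n - (∏ j ∈ range n, q j) * q n|
        ≤ |∏ j ∈ range n, p j - ∏ j ∈ range n, q j| * q n
          + (∏ j ∈ range n, p j) * |p n - q n| := by
      rw [key]
      calc |(∏ j ∈ range n, p j - ∏ j ∈ range n, q j) * q n
              + (∏ j ∈ range n, p j) * (p n - q n)|
          ≤ |(∏ j ∈ range n, p j - ∏ j ∈ range n, q j) * q n|
            + |(∏ j ∈ range n, p j) * (p n - q n)| := abs_add_le _ _
        _ = |∏ j ∈ range n, p j - ∏ j ∈ range n, q j| * q n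
            + (∏ j ∈ range n, p j) * |p n - q n| := by
              rw [abs_mul, abs_mul, habs, hqabs]
    have step2 : |∏ j ∈ range n, p j - ∏ j ∈ range n, q j| * q n
          + (∏ j ∈ range n, p j) * |p n - q n|
        ≤ (n * D * r ^ (n - 1)) * r + r ^ n * D := by
      have h1 : |∏ j ∈ range n, p j - ∏ j ∈ range n, q j| * q n
          ≤ (n * D * r ^ (n - 1)) * r :=
        mul_le_mul ihn hqn.2 hqn.1 (by positivity)
      have h2 : (∏ j ∈ range n, p j) * |p n - q n| ≤ r ^ n * D :=
        mul_le_mul hPnr (hpq n hn1) (abs_nonneg _) (by positivity)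
      linarith
    have step3 : (n * D * r ^ (n - 1)) * r + r ^ n * D
        ≤ (↑(n + 1) : ℝ) * D * r ^ (n + 1 - 1) := by
      have h3 : ((n : ℝ)) * D * r ^ (n - 1) * r ≤ (n : ℝ) * D * r ^ n := by
        cases n with
        | zero => simp
        | succ m =>
          apply le_of_eq
          rw [Nat.succ_sub_one, pow_succ]
          ring
      have h4 : (↑(n + 1) : ℝ) * D * r ^ (n + 1 - 1)
          = (n : ℝ) * D * r ^ n + r ^ n * D := by
        rw [Nat.succ_sub_one]; push_cast; ring
      linarith
    linarith

theorem dms_discrete_fading_memory_functional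
    (A G : ℝ → ℝ) (hA : ContDiff ℝ 1 A) (hG : ContDiff ℝ 1 G)
    (a b ν Ts : ℝ) (hab : a ≤ b) (hν : 0 < ν) (hTs : 0 < Ts)
    (hAν : ∀ v ∈ Set.Icc a b, A v ≤ -ν)
    (hGpos : ∀ v ∈ Set.Icc a b, 0 ≤ G v)
    (M M' Gmax : ℝ)
    (hM : IsGreatest
      ((fun v => |deriv (fun u => Real.exp (A u * Ts)) v|) '' Set.Icc a b) M)
    (hM' : IsGreatest ((fun v => |deriv G v|) '' Set.Icc a b) M')
    (hGmax : IsGreatest (G '' Set.Icc a b) Gmax)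
    (w : ℤ → ℝ) (hw : ∀ k : ℤ, k ≤ 0 → 0 < w k ∧ w k ≤ 1)
    (hw0 : Filter.Tendsto w Filter.atBot (nhds 0))
    (c₁ c₂ : ℝ)
    (hc₁s : Summable (fun n : ℕ => ((n : ℝ) + 1) * Real.exp (-(n : ℝ) * ν * Ts) /
      sInf (w '' Set.Icc (-(n : ℤ) - 1) 0)))
    (hc₁ : c₁ = ∑' n : ℕ, ((n : ℝ) + 1) * Real.exp (-(n : ℝ) * ν * Ts) /
      sInf (w '' Set.Icc (-(n : ℤ) - 1) 0))
    (hc₂s : Summable (fun n : ℕ => Real.exp (-(n : ℝ) * ν * Ts) / w (-(n : ℤ) - 1)))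
    (hc₂ : c₂ = ∑' n : ℕ, Real.exp (-(n : ℝ) * ν * Ts) / w (-(n : ℤ) - 1))
    (F : (ℤ → ℝ) → ℝ)
    (hF : ∀ Vt : ℤ → ℝ, F Vt = ∑' n : ℕ,
      (∏ j ∈ Finset.range n, Real.exp (A (Vt (-1 - (j : ℤ))) * Ts)) *
        G (Vt (-1 - (n : ℤ)))) :
    (∀ Vt : ℤ → ℝ, (∀ k : ℤ, k ≤ 0 → Vt k ∈ Set.Icc a b) →
      Summable (fun n : ℕ =>
        (∏ j ∈ Finset.range n, Real.exp (A (Vt (-1 - (j : ℤ))) * Ts)) *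
          G (Vt (-1 - (n : ℤ))))) ∧
    (∀ Vt Vt' : ℤ → ℝ,
      (∀ k : ℤ, k ≤ 0 → Vt k ∈ Set.Icc a b) →
      (∀ k : ℤ, k ≤ 0 → Vt' k ∈ Set.Icc a b) →
      |F Vt - F Vt'| ≤ (M * Gmax * c₁ + M' * c₂) *
        ⨆ k : {k : ℤ // k ≤ 0}, w k.1 * |Vt k.1 - Vt' k.1|) ∧
    (∀ ε > (0 : ℝ), ∃ δ > (0 : ℝ), ∀ Vt Vt' : ℤ → ℝ,
      (∀ k : ℤ, k ≤ 0 → Vt k ∈ Set.Icc a b) →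
      (∀ k : ℤ, k ≤ 0 → Vt' k ∈ Set.Icc a b) →
      (⨆ k : {k : ℤ // k ≤ 0}, w k.1 * |Vt k.1 - Vt' k.1|) < δ →
      |F Vt - F Vt'| < ε) := by
  -- basic constants
  set r : ℝ := Real.exp (-(ν * Ts)) with hr_def
  have hr0 : 0 < r := Real.exp_pos _
  have hr1 : r < 1 := by
    rw [hr_def]
    rw [Real.exp_lt_one_iff]
    nlinarith
  have hrpow : ∀ n : ℕ, r ^ n = Real.exp (-(n : ℝ) * ν * Ts) := by
    intro n
    rw [hr_def, ← Real.exp_nat_mul]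
    ring_nf
  -- exponent bound
  have hE : ∀ v ∈ Set.Icc a b, Real.exp (A v * Ts) ≤ r := by
    intro v hv
    rw [hr_def]
    apply Real.exp_le_exp.mpr
    have := hAν v hv
    nlinarith
  -- nonnegativity of the constants
  have hM0 : 0 ≤ M := by
    obtain ⟨x, _, hxM⟩ := hM.1
    rw [← hxM]; exact abs_nonneg _
  have hM'0 : 0 ≤ M' := by
    obtain ⟨x, _, hxM⟩ := hM'.1
    rw [← hxM]; exact abs_nonneg _
  have hGmax0 : 0 ≤ Gmax := by
    obtain ⟨x, hx, hxG⟩ := hGmax.1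
    rw [← hxG]; exact hGpos x hx
  -- Lipschitz bounds via the mean value inequality
  have hElip : ∀ u v : ℝ, u ∈ Set.Icc a b → v ∈ Set.Icc a b →
      |Real.exp (A u * Ts) - Real.exp (A v * Ts)| ≤ M * |u - v| := by
    intro u v hu hv
    have hdiff : ∀ x ∈ Set.Icc a b, DifferentiableAt ℝ
        (fun u => Real.exp (A u * Ts)) x := by
      intro x _
      exact (((hA.differentiable one_ne_zero) x).mul_const Ts).exp
    have hbound : ∀ x ∈ Set.Icc a b,
        ‖deriv (fun u => Real.exp (A u * Ts)) x‖ ≤ M := by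
      intro x hx
      rw [Real.norm_eq_abs]
      exact hM.2 ⟨x, hx, rfl⟩
    have := Convex.norm_image_sub_le_of_norm_deriv_le hdiff hbound
      (convex_Icc a b) hv hu
    simpa [Real.norm_eq_abs] using this
  have hGlip : ∀ u v : ℝ, u ∈ Set.Icc a b → v ∈ Set.Icc a b →
      |G u - G v| ≤ M' * |u - v| := by
    intro u v hu hv
    have hdiff : ∀ x ∈ Set.Icc a b, DifferentiableAt ℝ G x :=
      fun x _ => (hG.differentiable one_ne_zero) x
    have hbound : ∀ x ∈ Set.Icc a b, ‖deriv G x‖ ≤ M' := by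
      intro x hx
      rw [Real.norm_eq_abs]
      exact hM'.2 ⟨x, hx, rfl⟩
    have := Convex.norm_image_sub_le_of_norm_deriv_le hdiff hbound
      (convex_Icc a b) hv hu
    simpa [Real.norm_eq_abs] using this
  -- infimum of weights over finite windows
  have hsInf : ∀ m : ℤ, m ≤ 0 → 0 < sInf (w '' Set.Icc m 0) ∧
      ∀ k ∈ Set.Icc m 0, sInf (w '' Set.Icc m 0) ≤ w k := by
    intro m hm
    have hfin : (Set.Icc m 0).Finite := Set.finite_Icc _ _
    have hne : (Set.Icc m 0).Nonempty := ⟨0, Set.mem_Icc.mpr ⟨hm, le_refl 0⟩⟩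
    have hfin' : (w '' Set.Icc m 0).Finite := hfin.image w
    have hne' : (w '' Set.Icc m 0).Nonempty := hne.image w
    have hmem := hne'.csInf_mem hfin'
    obtain ⟨k₀, hk₀, hk₀eq⟩ := hmem
    constructor
    · rw [← hk₀eq]
      exact (hw k₀ (Set.mem_Icc.mp hk₀).2).1
    · intro k hk
      exact csInf_le hfin'.bddBelow ⟨k, hk, rfl⟩
  -- nonnegativity of c₁, c₂
  have hc₁0 : 0 ≤ c₁ := by
    rw [hc₁]
    apply tsum_nonneg
    intro n
    have := (hsInf (-(n : ℤ) - 1) (by omega)).1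
    positivity
  have hc₂0 : 0 ≤ c₂ := by
    rw [hc₂]
    apply tsum_nonneg
    intro n
    have := (hw (-(n : ℤ) - 1) (by omega)).1
    positivity
  -- Part 1: summability
  have part1 : ∀ Vt : ℤ → ℝ, (∀ k : ℤ, k ≤ 0 → Vt k ∈ Set.Icc a b) →
      Summable (fun n : ℕ =>
        (∏ j ∈ Finset.range n, Real.exp (A (Vt (-1 - (j : ℤ))) * Ts)) *
          G (Vt (-1 - (n : ℤ)))) := by
    intro Vt hV
    apply Summable.of_nonneg_of_le (f := fun n : ℕ => r ^ n * Gmax)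
    · intro n
      apply mul_nonneg
      · exact Finset.prod_nonneg fun j _ => (Real.exp_pos _).le
      · exact hGpos _ (hV _ (by omega))
    · intro n
      apply mul_le_mul
      · calc ∏ j ∈ Finset.range n, Real.exp (A (Vt (-1 - (j : ℤ))) * Ts)
            ≤ ∏ _j ∈ Finset.range n, r :=
              Finset.prod_le_prod (fun j _ => (Real.exp_pos _).le)
                (fun j _ => hE _ (hV _ (by omega)))
          _ = r ^ n := by rw [Finset.prod_const, Finset.card_range]
      · exact hGmax.2 ⟨_, hV _ (by omega), rfl⟩
      · exact hGpos _ (hV _ (by omega))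
      · positivity
    · exact (summable_geometric_of_lt_one hr0.le hr1).mul_right Gmax
  -- Part 2: the Lipschitz estimate
  have part2 : ∀ Vt Vt' : ℤ → ℝ,
      (∀ k : ℤ, k ≤ 0 → Vt k ∈ Set.Icc a b) →
      (∀ k : ℤ, k ≤ 0 → Vt' k ∈ Set.Icc a b) →
      |F Vt - F Vt'| ≤ (M * Gmax * c₁ + M' * c₂) *
        ⨆ k : {k : ℤ // k ≤ 0}, w k.1 * |Vt k.1 - Vt' k.1| := by
    intro Vt Vt' hV hV'
    set S : ℝ := ⨆ k : {k : ℤ // k ≤ 0}, w k.1 * |Vt k.1 - Vt' k.1| with hS_def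
    have hbdd : BddAbove (Set.range fun k : {k : ℤ // k ≤ 0} =>
        w k.1 * |Vt k.1 - Vt' k.1|) := by
      refine ⟨b - a, ?_⟩
      rintro x ⟨k, rfl⟩
      have h1 := hV k.1 k.2
      have h2 := hV' k.1 k.2
      rw [Set.mem_Icc] at h1 h2
      have habs : |Vt k.1 - Vt' k.1| ≤ b - a := by
        rw [abs_sub_le_iff]; constructor <;> linarith
      have hwk := hw k.1 k.2
      calc w k.1 * |Vt k.1 - Vt' k.1| ≤ 1 * (b - a) :=
            mul_le_mul hwk.2 habs (abs_nonneg _) zero_le_one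
        _ = b - a := one_mul _
    have hSk : ∀ k : ℤ, (hk : k ≤ 0) → w k * |Vt k - Vt' k| ≤ S :=
      fun k hk => le_ciSup hbdd ⟨k, hk⟩
    have hS0 : 0 ≤ S := by
      have h0 := hSk 0 le_rfl
      have : 0 ≤ w 0 * |Vt 0 - Vt' 0| :=
        mul_nonneg (hw 0 le_rfl).1.le (abs_nonneg _)
      linarith
    have hΔ : ∀ k : ℤ, k ≤ 0 → |Vt k - Vt' k| ≤ S / w k := by
      intro k hk
      rw [le_div_iff₀ (hw k hk).1]
      calc |Vt k - Vt' k| * w k = w k * |Vt k - Vt' k| := by ring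
        _ ≤ S := hSk k hk
    -- abbreviations
    set t : ℕ → ℝ := fun n =>
      (∏ j ∈ Finset.range n, Real.exp (A (Vt (-1 - (j : ℤ))) * Ts)) *
        G (Vt (-1 - (n : ℤ))) with ht_def
    set t' : ℕ → ℝ := fun n =>
      (∏ j ∈ Finset.range n, Real.exp (A (Vt' (-1 - (j : ℤ))) * Ts)) *
        G (Vt' (-1 - (n : ℤ))) with ht'_def
    have hts : Summable t := part1 Vt hV
    have ht's : Summable t' := part1 Vt' hV'
    -- per-term bounds
    set u : ℕ → ℝ := fun n =>
      (n : ℝ) * (M * S / sInf (w '' Set.Icc (-(n : ℤ)) 0)) * r ^ (n - 1) * Gmax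
      with hu_def
    set v : ℕ → ℝ := fun n =>
      r ^ n * (M' * (S / w (-(n : ℤ) - 1))) with hv_def
    have hu0 : ∀ n, 0 ≤ u n := by
      intro n
      have := (hsInf (-(n : ℤ)) (by omega)).1
      rw [hu_def]
      positivity
    have hv0 : ∀ n, 0 ≤ v n := by
      intro n
      have := (hw (-(n : ℤ) - 1) (by omega)).1
      rw [hv_def]
      positivity
    have hterm : ∀ n : ℕ, |t n - t' n| ≤ u n + v n := by
      intro n
      have hsinf_n := hsInf (-(n : ℤ)) (by omega)
      set Dn : ℝ := M * S / sInf (w '' Set.Icc (-(n : ℤ)) 0) with hDn_def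
      have hDn0 : 0 ≤ Dn := by
        have := hsinf_n.1
        rw [hDn_def]; positivity
      -- product difference
      have hprod : |(∏ j ∈ Finset.range n, Real.exp (A (Vt (-1 - (j : ℤ))) * Ts)) -
          (∏ j ∈ Finset.range n, Real.exp (A (Vt' (-1 - (j : ℤ))) * Ts))|
          ≤ (n : ℝ) * Dn * r ^ (n - 1) := by
        apply dms_prod_diff r Dn hr0.le hDn0 n
        · intro j hj
          exact ⟨(Real.exp_pos _).le, hE _ (hV _ (by omega))⟩
        · intro j hj
          exact ⟨(Real.exp_pos _).le, hE _ (hV' _ (by omega))⟩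
        · intro j hj
          have hmem : (-1 - (j : ℤ)) ∈ Set.Icc (-(n : ℤ)) 0 := by
            rw [Set.mem_Icc]; omega
          have h1 := hElip (Vt (-1 - (j : ℤ))) (Vt' (-1 - (j : ℤ)))
            (hV _ (by omega)) (hV' _ (by omega))
          have h2 := hΔ (-1 - (j : ℤ)) (by omega)
          have h3 := hsinf_n.2 _ hmem
          have hw1 := (hw (-1 - (j : ℤ)) (by omega)).1
          calc |Real.exp (A (Vt (-1 - (j : ℤ))) * Ts) -
                Real.exp (A (Vt' (-1 - (j : ℤ))) * Ts)|
              ≤ M * |Vt (-1 - (j : ℤ)) - Vt' (-1 - (j : ℤ))| := h1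
            _ ≤ M * (S / w (-1 - (j : ℤ))) :=
                mul_le_mul_of_nonneg_left h2 hM0
            _ = M * S / w (-1 - (j : ℤ)) := by ring
            _ ≤ M * S / sInf (w '' Set.Icc (-(n : ℤ)) 0) :=
                div_le_div_of_nonneg_left (mul_nonneg hM0 hS0) hsinf_n.1 h3
            _ = Dn := hDn_def.symm
      -- G difference
      have hGd : |G (Vt (-1 - (n : ℤ))) - G (Vt' (-1 - (n : ℤ)))|
          ≤ M' * (S / w (-(n : ℤ) - 1)) := by
        have heq : (-1 - (n : ℤ)) = (-(n : ℤ) - 1) := by ring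
        rw [heq]
        calc |G (Vt (-(n : ℤ) - 1)) - G (Vt' (-(n : ℤ) - 1))|
            ≤ M' * |Vt (-(n : ℤ) - 1) - Vt' (-(n : ℤ) - 1)| :=
              hGlip _ _ (hV _ (by omega)) (hV' _ (by omega))
          _ ≤ M' * (S / w (-(n : ℤ) - 1)) :=
              mul_le_mul_of_nonneg_left (hΔ _ (by omega)) hM'0
      -- bounds on the primed product and G value
      have hP'0 : 0 ≤ ∏ j ∈ Finset.range n, Real.exp (A (Vt' (-1 - (j : ℤ))) * Ts) :=
        Finset.prod_nonneg fun j _ => (Real.exp_pos _).le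
      have hP'r : (∏ j ∈ Finset.range n, Real.exp (A (Vt' (-1 - (j : ℤ))) * Ts)) ≤ r ^ n := by
        calc (∏ j ∈ Finset.range n, Real.exp (A (Vt' (-1 - (j : ℤ))) * Ts))
            ≤ ∏ _j ∈ Finset.range n, r :=
              Finset.prod_le_prod (fun j _ => (Real.exp_pos _).le)
                (fun j _ => hE _ (hV' _ (by omega)))
          _ = r ^ n := by rw [Finset.prod_const, Finset.card_range]
      have hGv0 : 0 ≤ G (Vt (-1 - (n : ℤ))) := hGpos _ (hV _ (by omega))
      have hGvmax : G (Vt (-1 - (n : ℤ))) ≤ Gmax := hGmax.2 ⟨_, hV _ (by omega), rfl⟩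
      -- combine
      have hkey : t n - t' n =
          ((∏ j ∈ Finset.range n, Real.exp (A (Vt (-1 - (j : ℤ))) * Ts)) -
            (∏ j ∈ Finset.range n, Real.exp (A (Vt' (-1 - (j : ℤ))) * Ts))) *
            G (Vt (-1 - (n : ℤ)))
          + (∏ j ∈ Finset.range n, Real.exp (A (Vt' (-1 - (j : ℤ))) * Ts)) *
            (G (Vt (-1 - (n : ℤ))) - G (Vt' (-1 - (n : ℤ)))) := by
        rw [ht_def, ht'_def]; ring
      calc |t n - t' n|
          ≤ |((∏ j ∈ Finset.range n, Real.exp (A (Vt (-1 - (j : ℤ))) * Ts)) -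
              (∏ j ∈ Finset.range n, Real.exp (A (Vt' (-1 - (j : ℤ))) * Ts))) *
              G (Vt (-1 - (n : ℤ)))|
            + |(∏ j ∈ Finset.range n, Real.exp (A (Vt' (-1 - (j : ℤ))) * Ts)) *
              (G (Vt (-1 - (n : ℤ))) - G (Vt' (-1 - (n : ℤ))))| := by
            rw [hkey]; exact abs_add_le _ _
        _ ≤ ((n : ℝ) * Dn * r ^ (n - 1)) * Gmax
            + r ^ n * (M' * (S / w (-(n : ℤ) - 1))) := by
            rw [abs_mul, abs_mul, abs_of_nonneg hGv0, abs_of_nonneg hP'0]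
            have h1 : |(∏ j ∈ Finset.range n, Real.exp (A (Vt (-1 - (j : ℤ))) * Ts)) -
                (∏ j ∈ Finset.range n, Real.exp (A (Vt' (-1 - (j : ℤ))) * Ts))| *
                G (Vt (-1 - (n : ℤ))) ≤ ((n : ℝ) * Dn * r ^ (n - 1)) * Gmax :=
              mul_le_mul hprod hGvmax hGv0 (by positivity)
            have h2 : (∏ j ∈ Finset.range n, Real.exp (A (Vt' (-1 - (j : ℤ))) * Ts)) *
                |G (Vt (-1 - (n : ℤ))) - G (Vt' (-1 - (n : ℤ)))|
                ≤ r ^ n * (M' * (S / w (-(n : ℤ) - 1))) :=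
              mul_le_mul hP'r hGd (abs_nonneg _) (by positivity)
            linarith
        _ = u n + v n := by simp only [hu_def, hv_def, hDn_def]
      -- note: `rw` above closes by rfl after unfolding
    -- sums of the bounding sequences
    have hv_eq : v = fun n : ℕ => (M' * S) *
        (Real.exp (-(n : ℝ) * ν * Ts) / w (-(n : ℤ) - 1)) := by
      funext n
      simp only [hv_def]
      rw [hrpow n]
      ring
    have hvs : Summable v := by
      rw [hv_eq]; exact hc₂s.mul_left _
    have hvsum : ∑' n, v n = M' * S * c₂ := by
      rw [hv_eq, tsum_mul_left, hc₂]
    have hu_succ : (fun n : ℕ => u (n + 1)) = fun n : ℕ => (M * Gmax * S) *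
        (((n : ℝ) + 1) * Real.exp (-(n : ℝ) * ν * Ts) /
          sInf (w '' Set.Icc (-(n : ℤ) - 1) 0)) := by
      funext n
      have hIcc : (-(((n : ℕ) + 1 : ℕ) : ℤ)) = -(n : ℤ) - 1 := by push_cast; ring
      simp only [hu_def, hIcc, Nat.add_sub_cancel]
      rw [hrpow n]
      push_cast
      ring
    have hus : Summable u := by
      rw [← summable_nat_add_iff 1, hu_succ]
      exact hc₁s.mul_left _
    have husum : ∑' n, u n = M * Gmax * S * c₁ := by
      rw [Summable.tsum_eq_zero_add hus]
      have hu0' : u 0 = 0 := by rw [hu_def]; simp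
      rw [hu0', hu_succ, tsum_mul_left, hc₁]
      ring
    -- assemble
    have habs_s : Summable (fun n => |t n - t' n|) := by
      apply Summable.of_nonneg_of_le (f := fun n => u n + v n)
        (fun n => abs_nonneg _) hterm (hus.add hvs)
    have hFsub : F Vt - F Vt' = ∑' n, (t n - t' n) := by
      rw [hF Vt, hF Vt', ← Summable.tsum_sub hts ht's]
    calc |F Vt - F Vt'| = |∑' n, (t n - t' n)| := by rw [hFsub]
      _ ≤ ∑' n, |t n - t' n| := by
          have := norm_tsum_le_tsum_norm (f := fun n => t n - t' n)
            (by simpa [Real.norm_eq_abs] using habs_s)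
          simpa [Real.norm_eq_abs] using this
      _ ≤ ∑' n, (u n + v n) := Summable.tsum_le_tsum hterm habs_s (hus.add hvs)
      _ = ∑' n, u n + ∑' n, v n := Summable.tsum_add hus hvs
      _ = M * Gmax * S * c₁ + M' * S * c₂ := by rw [husum, hvsum]
      _ = (M * Gmax * c₁ + M' * c₂) * S := by ring
  -- Part 3: continuity
  refine ⟨part1, part2, ?_⟩
  intro ε hε
  set L : ℝ := M * Gmax * c₁ + M' * c₂ with hL_def
  have hL0 : 0 ≤ L := by
    rw [hL_def]
    have : 0 ≤ M * Gmax * c₁ := by positivity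
    have : 0 ≤ M' * c₂ := by positivity
    positivity
  refine ⟨ε / (L + 1), by positivity, ?_⟩
  intro Vt Vt' hV hV' hlt
  have h1 := part2 Vt Vt' hV hV'
  have h2 : L * (⨆ k : {k : ℤ // k ≤ 0}, w k.1 * |Vt k.1 - Vt' k.1|)
      ≤ L * (ε / (L + 1)) := mul_le_mul_of_nonneg_left hlt.le hL0
  have h3 : L * (ε / (L + 1)) < ε := by
    have hL1 : 0 < L + 1 := by linarith
    rw [← mul_div_assoc, div_lt_iff₀ hL1]
    nlinarith
  calc |F Vt - F Vt'| ≤ L * _ := h1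
    _ ≤ L * (ε / (L + 1)) := h2
    _ < ε := h3
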